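/- Let d ≥ 1, r₀ > 0, σ ∈ ℝ. Suppose φ : [0, r₀) → ℂ is continuous on [0, r₀), twice continuously differentiable on (0, r₀), satisfies φ''(r) + ((d−1)/r) φ'(r) = σ φ(r) for all 0 < r < r₀, and satisfies φ(0) = 0 and lim_{r → 0⁺} φ'(r) = 0. Then φ is identically zero on [0, r₀). -/

import Mathlib

open Set Filter Complex

private lemma hasDerivAt_normSq_comp {g : ℝ → ℂ} {g' : ℂ} {x : ℝ}
    (h : HasDerivAt g g' x) :
    HasDerivAt (fun r => Complex.normSq (g r))
      (2 * ((g x).re * g'.re + (g x).im * g'.im)) x := by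
  have hre : HasDerivAt (fun r => (g r).re) g'.re x :=
    Complex.reCLM.hasFDerivAt.comp_hasDerivAt x h
  have him : HasDerivAt (fun r => (g r).im) g'.im x :=
    Complex.imCLM.hasFDerivAt.comp_hasDerivAt x h
  have := (hre.mul hre).add (him.mul him)
  have heq : (fun r => (g r).re * (g r).re + (g r).im * (g r).im)
      = fun r => Complex.normSq (g r) := by
    funext r; simp [Complex.normSq_apply]
  replace this : HasDerivAt (fun r => (g r).re * (g r).re + (g r).im * (g r).im) _ x := this
  rw [heq] at this
  convert this using 1; ring

/-- Uniqueness for the radial eigenfunction ODE `φ'' + ((d−1)/r) φ' = σ φ`: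
if `φ` is continuous on `[0,r₀)`, `C²` on `(0,r₀)`, satisfies the ODE on `(0,r₀)`,
and `φ(0) = 0` with `φ'(r) → 0` as `r → 0⁺`, then `φ ≡ 0` on `[0,r₀)`. -/
theorem radial_ode_uniqueness (d : ℕ) (hd : 1 ≤ d) (r₀ : ℝ) (hr₀ : 0 < r₀)
    (σ : ℝ) (φ : ℝ → ℂ)
    (hcont : ContinuousOn φ (Set.Ico 0 r₀))
    (hC2 : ContDiffOn ℝ 2 φ (Set.Ioo 0 r₀))
    (hode : ∀ r ∈ Set.Ioo (0 : ℝ) r₀,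
      deriv (deriv φ) r + (((d : ℂ) - 1) / (r : ℂ)) * deriv φ r = (σ : ℂ) * φ r)
    (h0 : φ 0 = 0)
    (h0' : Filter.Tendsto (deriv φ) (nhdsWithin 0 (Set.Ioi 0)) (nhds 0)) :
    ∀ r ∈ Set.Ico (0 : ℝ) r₀, φ r = 0 := by
  set ψ := deriv φ with hψ
  set K : ℝ := 1 + |σ| with hK
  have hK0 : 0 < K := by positivity
  -- differentiability facts
  have hφd : ∀ r ∈ Set.Ioo (0:ℝ) r₀, HasDerivAt φ (ψ r) r := by
    intro r hr
    exact ((hC2.differentiableOn two_ne_zero r hr).differentiableAt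
      (isOpen_Ioo.mem_nhds hr)).hasDerivAt
  have hψC1 : ContDiffOn ℝ 1 ψ (Set.Ioo 0 r₀) :=
    hC2.deriv_of_isOpen isOpen_Ioo (by norm_num)
  have hψd : ∀ r ∈ Set.Ioo (0:ℝ) r₀, HasDerivAt ψ (deriv ψ r) r := by
    intro r hr
    exact ((hψC1.differentiableOn one_ne_zero r hr).differentiableAt
      (isOpen_Ioo.mem_nhds hr)).hasDerivAt
  -- ODE rewritten
  have hode' : ∀ r ∈ Set.Ioo (0:ℝ) r₀,
      deriv ψ r = (σ : ℂ) * φ r - ((((d:ℝ) - 1) / r : ℝ) : ℂ) * ψ r := by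
    intro r hr
    have := hode r hr
    have hc : ((((d:ℝ) - 1) / r : ℝ) : ℂ) = ((d : ℂ) - 1) / (r : ℂ) := by
      push_cast; ring
    rw [hc]
    linear_combination this
  -- energy
  set E : ℝ → ℝ := fun r => Complex.normSq (φ r) + Complex.normSq (ψ r) with hE
  set E' : ℝ → ℝ := fun r =>
    2 * ((φ r).re * (ψ r).re + (φ r).im * (ψ r).im)
      + 2 * ((ψ r).re * (deriv ψ r).re + (ψ r).im * (deriv ψ r).im) with hE'
  have hEd : ∀ r ∈ Set.Ioo (0:ℝ) r₀, HasDerivAt E (E' r) r := by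
    intro r hr
    exact (hasDerivAt_normSq_comp (hφd r hr)).add (hasDerivAt_normSq_comp (hψd r hr))
  have hE0 : ∀ r, 0 ≤ E r := fun r =>
    add_nonneg (Complex.normSq_nonneg _) (Complex.normSq_nonneg _)
  -- key differential inequality
  have hineq : ∀ r ∈ Set.Ioo (0:ℝ) r₀, E' r ≤ K * E r := by
    intro r hr
    have hder := hode' r hr
    set c : ℝ := ((d:ℝ) - 1) / r with hc
    have hc0 : 0 ≤ c := by
      apply div_nonneg _ hr.1.le
      have : (1:ℝ) ≤ (d:ℝ) := by exact_mod_cast hd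
      linarith
    have hre : (deriv ψ r).re = σ * (φ r).re - c * (ψ r).re := by
      rw [hder]; simp [Complex.sub_re, Complex.mul_re]
    have him : (deriv ψ r).im = σ * (φ r).im - c * (ψ r).im := by
      rw [hder]; simp [Complex.sub_im, Complex.mul_im]
    simp only [hE', hE, hK, Complex.normSq_apply, hre, him]
    set a := (φ r).re; set b := (φ r).im
    set p := (ψ r).re; set q := (ψ r).im
    have h1 : σ ≤ |σ| := le_abs_self σ
    have h2 : -σ ≤ |σ| := neg_le_abs σ
    nlinarith [sq_nonneg (a - p), sq_nonneg (a + p), sq_nonneg (b - q), sq_nonneg (b + q),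
      mul_nonneg (abs_nonneg σ) (sq_nonneg (a - p)),
      mul_nonneg (abs_nonneg σ) (sq_nonneg (a + p)),
      mul_nonneg (abs_nonneg σ) (sq_nonneg (b - q)),
      mul_nonneg (abs_nonneg σ) (sq_nonneg (b + q)),
      mul_nonneg hc0 (sq_nonneg p), mul_nonneg hc0 (sq_nonneg q)]
  -- the decreasing auxiliary function
  set F : ℝ → ℝ := fun r => E r * Real.exp (-K * r) with hF
  have hFd : ∀ r ∈ Set.Ioo (0:ℝ) r₀,
      HasDerivAt F ((E' r - K * E r) * Real.exp (-K * r)) r := by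
    intro r hr
    have hexp : HasDerivAt (fun r : ℝ => Real.exp (-K * r)) (-K * Real.exp (-K * r)) r := by
      have := ((hasDerivAt_id r).const_mul (-K)).exp
      simpa [mul_comm] using this
    have := (hEd r hr).mul hexp
    exact this.congr_deriv (by ring)
  -- Gronwall on [ε, r₁]
  suffices hs : ∀ r₁ ∈ Set.Ioo (0:ℝ) r₀, E r₁ ≤ 0 by
    rintro r ⟨hr1, hr2⟩
    rcases eq_or_lt_of_le hr1 with h | h
    · rw [← h]; exact h0
    · have h1 := hs r ⟨h, hr2⟩
      have h2 : Complex.normSq (φ r) = 0 := by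
        have := Complex.normSq_nonneg (φ r); have := Complex.normSq_nonneg (ψ r)
        simp only [hE] at h1; linarith
      exact Complex.normSq_eq_zero.mp h2
  intro r₁ hr₁
  have key : ∀ ε ∈ Set.Ioo (0:ℝ) r₁, E r₁ ≤ E ε * Real.exp (K * r₁) := by
    intro ε hε
    have hsub : Set.Icc ε r₁ ⊆ Set.Ioo 0 r₀ := fun x hx =>
      ⟨lt_of_lt_of_le hε.1 hx.1, lt_of_le_of_lt hx.2 hr₁.2⟩
    have hFanti : AntitoneOn F (Set.Icc ε r₁) := by
      apply antitoneOn_of_deriv_nonpos (convex_Icc ε r₁)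
      · intro x hx
        exact ((hFd x (hsub hx)).continuousAt).continuousWithinAt
      · intro x hx
        rw [interior_Icc] at hx
        exact (hFd x (hsub (Set.Ioo_subset_Icc_self hx))).differentiableAt.differentiableWithinAt
      · intro x hx
        rw [interior_Icc] at hx
        have hx' := hsub (Set.Ioo_subset_Icc_self hx)
        rw [(hFd x hx').deriv]
        apply mul_nonpos_of_nonpos_of_nonneg
        · have := hineq x hx'; linarith
        · exact (Real.exp_pos _).le
    have h1 : F r₁ ≤ F ε :=
      hFanti (Set.left_mem_Icc.mpr hε.2.le) (Set.right_mem_Icc.mpr hε.2.le) hε.2.le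
    have h2 : E r₁ * Real.exp (-K * r₁) ≤ E ε := by
      calc E r₁ * Real.exp (-K * r₁) ≤ E ε * Real.exp (-K * ε) := h1
        _ ≤ E ε * 1 := by
            apply mul_le_mul_of_nonneg_left _ (hE0 ε)
            exact Real.exp_le_one_iff.mpr (by nlinarith [hε.1, hK0])
        _ = E ε := mul_one _
    calc E r₁ = E r₁ * Real.exp (-K * r₁) * Real.exp (K * r₁) := by
          rw [mul_assoc, ← Real.exp_add]; simp
      _ ≤ E ε * Real.exp (K * r₁) :=
          mul_le_mul_of_nonneg_right h2 (Real.exp_pos _).le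
  -- take ε → 0⁺
  have hφtend : Tendsto φ (nhdsWithin 0 (Set.Ioi 0)) (nhds 0) := by
    have h1 : Tendsto φ (nhdsWithin 0 (Set.Ico 0 r₀)) (nhds 0) := by
      have := (hcont 0 ⟨le_refl 0, hr₀⟩).tendsto; rwa [h0] at this
    apply h1.mono_left
    exact le_trans (nhdsWithin_le_of_mem (Ioo_mem_nhdsGT_of_mem ⟨le_refl 0, hr₀⟩))
      (nhdsWithin_mono _ Set.Ioo_subset_Ico_self)
  have hEtend : Tendsto E (nhdsWithin 0 (Set.Ioi 0)) (nhds 0) := by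
    have h1 : Tendsto (fun ε => Complex.normSq (φ ε)) (nhdsWithin 0 (Set.Ioi 0)) (nhds 0) := by
      have := (Complex.continuous_normSq.tendsto 0).comp hφtend
      simpa [Function.comp_def] using this
    have h2 : Tendsto (fun ε => Complex.normSq (ψ ε)) (nhdsWithin 0 (Set.Ioi 0)) (nhds 0) := by
      have := (Complex.continuous_normSq.tendsto 0).comp h0'
      simpa [Function.comp_def] using this
    simpa using h1.add h2
  have hev : ∀ᶠ ε in nhdsWithin 0 (Set.Ioi 0), E r₁ ≤ E ε * Real.exp (K * r₁) := by
    filter_upwards [Ioo_mem_nhdsGT_of_mem (Set.mem_Ico.mpr ⟨le_refl 0, hr₁.1⟩)] with ε hε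
    exact key ε hε
  have := ge_of_tendsto (hEtend.mul_const (Real.exp (K * r₁))) hev
  simpa using this
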